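/- Let f : ℝ^n → ℝ and c : ℝ^n → ℝ^m be continuously differentiable, and let x* be a local minimizer of (P), i.e., x* is feasible and there is a neighborhood U of x* such that f(x*) ≤ f(x) for all feasible x ∈ U. Then x* is an AKKT stationary point for (P): there exist sequences {x^k}, {z^k} ⊂ ℝ^n and {y^k} ⊂ ℝ^m such that x^k → x*, ∇f(x^k) + ∇c(x^k)ᵀy^k + z^k → 0, and min{x^k_i, −z^k_i} → 0 for each i. -/

import Mathlib

open Filter Topology

open scoped RealInnerProductSpace

variable {n m : ℕ}

lemma aux_cone_pos {xstar x : EuclideanSpace ℝ (Fin n)} {δ : ℝ}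
    (hx : x ∈ Metric.ball xstar δ) (hx0 : ∀ j, 0 ≤ x j) (i : Fin n) :
    EuclideanSpace.single i (1:ℝ) ∈
      posTangentConeAt (Metric.closedBall xstar δ ∩ {y | ∀ j, 0 ≤ y j}) x := by
  apply mem_posTangentConeAt_of_frequently_mem
  apply Eventually.frequently
  have hδ : 0 < δ - dist x xstar := by
    simp only [Metric.mem_ball] at hx; linarith
  filter_upwards [Ioo_mem_nhdsGT_of_mem (Set.mem_Ico.mpr ⟨le_rfl, hδ⟩)] with t ht
  obtain ⟨ht0, ht1⟩ := ht
  constructor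
  · rw [Metric.mem_closedBall]
    calc dist (x + t • EuclideanSpace.single i (1:ℝ)) xstar
        ≤ dist (x + t • EuclideanSpace.single i (1:ℝ)) x + dist x xstar := dist_triangle _ _ _
      _ ≤ t + dist x xstar := by
          rw [dist_eq_norm]
          simp only [add_sub_cancel_left, norm_smul, EuclideanSpace.norm_single, norm_one,
            Real.norm_eq_abs, abs_of_pos ht0, mul_one, le_refl]
      _ ≤ δ := by linarith
  · intro j
    simp only [PiLp.add_apply, PiLp.smul_apply, EuclideanSpace.single_apply, smul_eq_mul]
    by_cases h : j = i
    · simp [h]; nlinarith [hx0 i]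
    · simp [h]; exact hx0 j

lemma aux_cone_neg {xstar x : EuclideanSpace ℝ (Fin n)} {δ : ℝ}
    (hx : x ∈ Metric.ball xstar δ) (hx0 : ∀ j, 0 ≤ x j) {i : Fin n} (hxi : 0 < x i) :
    -EuclideanSpace.single i (1:ℝ) ∈
      posTangentConeAt (Metric.closedBall xstar δ ∩ {y | ∀ j, 0 ≤ y j}) x := by
  apply mem_posTangentConeAt_of_frequently_mem
  apply Eventually.frequently
  have hδ : 0 < min (δ - dist x xstar) (x i) := by
    simp only [Metric.mem_ball] at hx
    apply lt_min (by linarith) hxi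
  filter_upwards [Ioo_mem_nhdsGT_of_mem (Set.mem_Ico.mpr ⟨le_rfl, hδ⟩)] with t ht
  obtain ⟨ht0, ht1⟩ := ht
  rw [lt_min_iff] at ht1
  constructor
  · rw [Metric.mem_closedBall]
    calc dist (x + t • -EuclideanSpace.single i (1:ℝ)) xstar
        ≤ dist (x + t • -EuclideanSpace.single i (1:ℝ)) x + dist x xstar := dist_triangle _ _ _
      _ ≤ t + dist x xstar := by
          rw [dist_eq_norm]
          simp only [add_sub_cancel_left, norm_smul, norm_neg, EuclideanSpace.norm_single,
            norm_one, Real.norm_eq_abs, abs_of_pos ht0, mul_one, le_refl]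
      _ ≤ δ := by linarith [ht1.1]
  · intro j
    simp only [PiLp.add_apply, PiLp.smul_apply, PiLp.neg_apply, EuclideanSpace.single_apply,
      smul_eq_mul]
    by_cases h : j = i
    · subst h; simp only [if_true, eq_self_iff_true, mul_neg, mul_one]; linarith [ht1.2]
    · simp [h]; exact hx0 j

lemma aux_deriv (f : EuclideanSpace ℝ (Fin n) → ℝ)
    (c : EuclideanSpace ℝ (Fin n) → EuclideanSpace ℝ (Fin m))
    (hf : ContDiff ℝ 1 f) (hc : ContDiff ℝ 1 c)
    (xstar : EuclideanSpace ℝ (Fin n)) (k : ℝ) (x : EuclideanSpace ℝ (Fin n)) :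
    ∃ L : EuclideanSpace ℝ (Fin n) →L[ℝ] ℝ,
      HasFDerivAt (fun x => f x + k * ⟪c x, c x⟫ + ⟪x - xstar, x - xstar⟫) L x ∧
      ∀ v, L v = fderiv ℝ f x v + 2 * k * ⟪c x, fderiv ℝ c x v⟫ + 2 * ⟪x - xstar, v⟫ := by
  have hfd : HasFDerivAt f (fderiv ℝ f x) x :=
    (hf.differentiable one_ne_zero x).hasFDerivAt
  have hcd : HasFDerivAt c (fderiv ℝ c x) x :=
    (hc.differentiable one_ne_zero x).hasFDerivAt
  have hq : HasFDerivAt (fun x : EuclideanSpace ℝ (Fin n) => x - xstar)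
      (ContinuousLinearMap.id ℝ _) x := (hasFDerivAt_id x).sub_const xstar
  have h1 := (hcd.inner ℝ hcd).const_mul k
  have h2 := hq.inner ℝ hq
  refine ⟨_, (hfd.add h1).add h2, fun v => ?_⟩
  simp only [ContinuousLinearMap.add_apply, ContinuousLinearMap.coe_smul',
    Pi.smul_apply, ContinuousLinearMap.coe_comp', Function.comp_apply,
    ContinuousLinearMap.prod_apply, fderivInnerCLM_apply, ContinuousLinearMap.coe_id', id,
    smul_eq_mul]
  rw [real_inner_comm ((fderiv ℝ c x) v) (c x), real_inner_comm v (x - xstar)]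
  ring

lemma aux_grad_comp (f : EuclideanSpace ℝ (Fin n) → ℝ) (x : EuclideanSpace ℝ (Fin n))
    (hfd : DifferentiableAt ℝ f x) (i : Fin n) :
    gradient f x i = fderiv ℝ f x (EuclideanSpace.single i 1) := by
  have h := hfd.hasFDerivAt.hasGradientAt.gradient
  have : ⟪gradient f x, EuclideanSpace.single i 1⟫ = fderiv ℝ f x (EuclideanSpace.single i 1) := by
    rw [h]
    simp [InnerProductSpace.toDual_symm_apply]
  rw [EuclideanSpace.inner_single_right] at this
  simpa using this

lemma aux_adj_comp (A : EuclideanSpace ℝ (Fin n) →L[ℝ] EuclideanSpace ℝ (Fin m))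
    (y : EuclideanSpace ℝ (Fin m)) (i : Fin n) :
    A.adjoint y i = ⟪y, A (EuclideanSpace.single i 1)⟫ := by
  rw [← ContinuousLinearMap.adjoint_inner_left]
  simp [EuclideanSpace.inner_single_right]

/-- local minimizers are AKKT stationary, no constraint
qualification needed.
Let f : ℝ^n → ℝ and c : ℝ^n → ℝ^m be continuously differentiable, and let x*
be a local minimizer of (P), i.e. x* is feasible and there is a neighborhood U
of x* such that f(x*) ≤ f(x) for all feasible x ∈ U.  Then x* is an AKKT
stationary point for (P): there exist sequences {x^k}, {z^k} ⊂ ℝ^n and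
{y^k} ⊂ ℝ^m such that x^k → x*, ∇f(x^k) + ∇c(x^k)ᵀy^k + z^k → 0, and
min{x^k_i, −z^k_i} → 0 for each i. -/
theorem stmt14 {n m : ℕ}
    (f : EuclideanSpace ℝ (Fin n) → ℝ)
    (c : EuclideanSpace ℝ (Fin n) → EuclideanSpace ℝ (Fin m))
    (hf : ContDiff ℝ 1 f) (hc : ContDiff ℝ 1 c)
    (xstar : EuclideanSpace ℝ (Fin n))
    (hfeas : (∀ i, 0 ≤ xstar i) ∧ c xstar = 0)
    (hlocmin : ∃ U ∈ nhds xstar,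
      ∀ x ∈ U, (∀ i, 0 ≤ x i) → c x = 0 → f xstar ≤ f x) :
    ∃ (xs zs : ℕ → EuclideanSpace ℝ (Fin n)) (ys : ℕ → EuclideanSpace ℝ (Fin m)),
      Tendsto xs atTop (nhds xstar) ∧
      Tendsto (fun k => gradient f (xs k) + (fderiv ℝ c (xs k)).adjoint (ys k) + zs k)
        atTop (nhds 0) ∧
      ∀ i, Tendsto (fun k => min (xs k i) (-(zs k i))) atTop (nhds 0) := by
  classical
  obtain ⟨hx0, hcx⟩ := hfeas
  obtain ⟨U, hU, hminU⟩ := hlocmin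
  obtain ⟨δ, hδpos, hball⟩ := Metric.nhds_basis_closedBall.mem_iff.mp hU
  set K : Set (EuclideanSpace ℝ (Fin n)) :=
    Metric.closedBall xstar δ ∩ {y | ∀ j, 0 ≤ y j} with hKdef
  have hclosed : IsClosed {y : EuclideanSpace ℝ (Fin n) | ∀ j, 0 ≤ y j} := by
    have : {y : EuclideanSpace ℝ (Fin n) | ∀ j, 0 ≤ y j} = ⋂ j, {y | 0 ≤ y j} := by
      ext y; simp
    rw [this]
    exact isClosed_iInter fun j =>
      isClosed_le continuous_const (EuclideanSpace.proj j).continuous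
  have hK : IsCompact K := (isCompact_closedBall xstar δ).inter_right hclosed
  have hxstarK : xstar ∈ K :=
    ⟨Metric.mem_closedBall_self (le_of_lt hδpos), hx0⟩
  -- the penalty functions
  set F : ℕ → EuclideanSpace ℝ (Fin n) → ℝ :=
    fun k x => f x + (k:ℝ) * ⟪c x, c x⟫ + ⟪x - xstar, x - xstar⟫ with hFdef
  choose L hL1 hL2 using fun (k : ℕ) => aux_deriv f c hf hc xstar (k:ℝ)
  have hFcont : ∀ k : ℕ, Continuous (F k) :=
    fun k => Differentiable.continuous (fun x => (hL1 k x).differentiableAt)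
  -- minimizers
  choose xs hxsK hxsmin using
    fun k : ℕ => hK.exists_isMinOn ⟨xstar, hxstarK⟩ (hFcont k).continuousOn
  have hbase : ∀ k : ℕ, f (xs k) + (k:ℝ) * ⟪c (xs k), c (xs k)⟫ +
      ⟪xs k - xstar, xs k - xstar⟫ ≤ f xstar := by
    intro k
    have h := hxsmin k hxstarK
    simp only [hFdef, Set.mem_setOf_eq, hcx, inner_zero_left, sub_self, mul_zero, add_zero] at h
    exact h
  -- lower bound for f on K
  obtain ⟨w, hwK, hwmin⟩ := hK.exists_isMinOn ⟨xstar, hxstarK⟩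
    (hf.continuous).continuousOn
  have h1 : ∀ k, f (xs k) + ⟪xs k - xstar, xs k - xstar⟫ ≤ f xstar := by
    intro k
    have := hbase k
    have h0 : 0 ≤ (k:ℝ) * ⟪c (xs k), c (xs k)⟫ :=
      mul_nonneg (Nat.cast_nonneg k) real_inner_self_nonneg
    linarith
  have h2 : ∀ k : ℕ, (k:ℝ) * ⟪c (xs k), c (xs k)⟫ ≤ f xstar - f w := by
    intro k
    have := hbase k
    have h0 : 0 ≤ ⟪xs k - xstar, xs k - xstar⟫ := real_inner_self_nonneg
    have hw : f w ≤ f (xs k) := hwmin (hxsK k)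
    linarith
  -- c (xs k) → 0
  have hctend : Tendsto (fun k => ⟪c (xs k), c (xs k)⟫) atTop (nhds 0) := by
    apply squeeze_zero' (Eventually.of_forall fun k => real_inner_self_nonneg)
      (g := fun k : ℕ => (f xstar - f w) / k)
    · filter_upwards [eventually_ge_atTop 1] with k hk
      have hkpos : (0:ℝ) < (k:ℝ) := by exact_mod_cast hk
      rw [le_div_iff₀ hkpos]
      calc ⟪c (xs k), c (xs k)⟫ * k = (k:ℝ) * ⟪c (xs k), c (xs k)⟫ := by ring
        _ ≤ f xstar - f w := h2 k
    · exact tendsto_const_div_atTop_nhds_zero_nat _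
  have hc0 : Tendsto (fun k => c (xs k)) atTop (nhds 0) := by
    rw [tendsto_zero_iff_norm_tendsto_zero]
    have : ∀ k, ‖c (xs k)‖ = Real.sqrt ⟪c (xs k), c (xs k)⟫ := by
      intro k
      rw [real_inner_self_eq_norm_sq, Real.sqrt_sq (norm_nonneg _)]
    simp only [this]
    have := (Real.continuous_sqrt.tendsto 0).comp hctend
    simpa [Function.comp_def] using this
  -- xs → xstar
  have hxs : Tendsto xs atTop (nhds xstar) := by
    apply tendsto_of_subseq_tendsto
    intro ns hns
    obtain ⟨xbar, hxbarK, φ, hφ, htend⟩ := hK.tendsto_subseq (fun j => hxsK (ns j))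
    refine ⟨φ, ?_⟩
    have hcomp : Tendsto (fun j => ns (φ j)) atTop atTop := hns.comp hφ.tendsto_atTop
    have hcbar : c xbar = 0 := by
      have ht1 : Tendsto (fun j => c (xs (ns (φ j)))) atTop (nhds (c xbar)) :=
        (hc.continuous.tendsto xbar).comp htend
      have ht2 : Tendsto (fun j => c (xs (ns (φ j)))) atTop (nhds 0) :=
        hc0.comp hcomp
      exact tendsto_nhds_unique ht1 ht2
    have hle : f xbar + ⟪xbar - xstar, xbar - xstar⟫ ≤ f xstar := by
      have htf : Tendsto (fun j => f (xs (ns (φ j))) +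
          ⟪xs (ns (φ j)) - xstar, xs (ns (φ j)) - xstar⟫) atTop
          (nhds (f xbar + ⟪xbar - xstar, xbar - xstar⟫)) := by
        apply Tendsto.add ((hf.continuous.tendsto xbar).comp htend)
        have : Continuous fun y : EuclideanSpace ℝ (Fin n) => ⟪y - xstar, y - xstar⟫ := by
          exact (continuous_id.sub continuous_const).inner (continuous_id.sub continuous_const)
        exact (this.tendsto xbar).comp htend
      exact le_of_tendsto htf (Eventually.of_forall fun j => h1 _)
    have hge : f xstar ≤ f xbar := hminU xbar (hball hxbarK.1) hxbarK.2 hcbar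
    have : ⟪xbar - xstar, xbar - xstar⟫ ≤ 0 := by linarith
    have hxbareq : xbar = xstar := by
      have := le_antisymm this real_inner_self_nonneg
      have := inner_self_eq_zero.mp this
      rwa [sub_eq_zero] at this
    rw [hxbareq] at htend
    exact htend
  -- eventually in the open ball
  have hev : ∀ᶠ k in atTop, xs k ∈ Metric.ball xstar δ :=
    hxs.eventually (Metric.ball_mem_nhds xstar hδpos)
  -- definitions of multipliers
  set ys : ℕ → EuclideanSpace ℝ (Fin m) := fun k => ((2:ℝ) * k) • c (xs k) with hysdef
  set zs : ℕ → EuclideanSpace ℝ (Fin n) :=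
    fun k => -(gradient f (xs k) + (fderiv ℝ c (xs k)).adjoint (ys k)) with hzsdef
  refine ⟨xs, zs, ys, hxs, ?_, ?_⟩
  · have hfun : ∀ k : ℕ, gradient f (xs k) +
        (fderiv ℝ c (xs k)).adjoint (ys k) + zs k = 0 := by
      intro k
      simp only [hzsdef]
      abel
    simpa only [hfun] using tendsto_const_nhds (x := (0 : EuclideanSpace ℝ (Fin n)))
  · intro i
    -- component convergence
    have hxsi : Tendsto (fun k => xs k i) atTop (nhds (xstar i)) :=
      ((EuclideanSpace.proj i).continuous.tendsto xstar).comp hxs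
    have hmain : Tendsto (fun k => min (xs k i) (2 * (xstar i - xs k i))) atTop (nhds 0) := by
      have h2' : Tendsto (fun k => 2 * (xstar i - xs k i)) atTop
          (nhds (2 * (xstar i - xstar i))) :=
        Tendsto.const_mul 2 ((tendsto_const_nhds (x := xstar i)).sub hxsi)
      have h3 := Tendsto.min hxsi h2'
      simpa [min_eq_right (hx0 i)] using h3
    apply hmain.congr'
    filter_upwards [hev] with k hk
    -- the key optimality identity at the minimizer
    have hloc : IsLocalMinOn (F k) K (xs k) :=
      (hxsmin k).filter_mono inf_le_right
    have hder : HasFDerivWithinAt (F k) (L k (xs k)) K (xs k) :=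
      (hL1 k (xs k)).hasFDerivWithinAt
    have hpos : 0 ≤ L k (xs k) (EuclideanSpace.single i 1) :=
      hloc.hasFDerivWithinAt_nonneg hder (aux_cone_pos hk (hxsK k).2 i)
    have hZ : -(zs k i) = L k (xs k) (EuclideanSpace.single i 1)
        - 2 * (xs k i - xstar i) := by
      have hA := aux_adj_comp (fderiv ℝ c (xs k)) (ys k) i
      have hG := aux_grad_comp f (xs k) (hf.differentiable one_ne_zero (xs k)) i
      have hL := hL2 k (xs k) (EuclideanSpace.single i 1)
      have hinner : ⟪xs k - xstar, EuclideanSpace.single i (1:ℝ)⟫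
          = xs k i - xstar i := by
        simp [EuclideanSpace.inner_single_right, PiLp.sub_apply]
      have hy : ⟪ys k, fderiv ℝ c (xs k) (EuclideanSpace.single i 1)⟫
          = 2 * (k:ℝ) * ⟪c (xs k), fderiv ℝ c (xs k) (EuclideanSpace.single i 1)⟫ := by
        rw [show ys k = ((2:ℝ)*(k:ℝ)) • c (xs k) from rfl, real_inner_smul_left]
      simp only [hzsdef, PiLp.neg_apply, PiLp.add_apply, neg_neg]
      rw [hG, hA, hy, hL, hinner]
      ring
    by_cases hxi : xs k i = 0
    · have : 0 ≤ -(zs k i) := by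
        rw [hZ, hxi]
        have : 0 ≤ xstar i := hx0 i
        linarith
      rw [hxi]
      rw [min_eq_left this, min_eq_left (by nlinarith [hx0 i])]
    · have hxipos : 0 < xs k i := lt_of_le_of_ne ((hxsK k).2 i) (Ne.symm hxi)
      have hzero : L k (xs k) (EuclideanSpace.single i 1) = 0 :=
        hloc.hasFDerivWithinAt_eq_zero hder (aux_cone_pos hk (hxsK k).2 i)
          (aux_cone_neg hk (hxsK k).2 hxipos)
      rw [hZ, hzero]
      ring_nf
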